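/- arXiv:1412.3495 — 2 statements merged into one kernel-verified Lean document; each statement's English description precedes it below -/
import Mathlib

section
/- Let f, g : ℂ → ℂ be continuous functions on the closed second quadrant D̄₂ = {k : Re k ≤ 0, Im k ≥ 0} that are analytic on its interior, with f(k) → 1 and g(k) → 1 as |k| → ∞ in D̄₂. If |g(k) − f(k)| < |f(k)| on the boundary ∂D₂ = (−∞,0] ∪ i[0,∞), and g has no zeros in D̄₂, then f has no zeros in D̄₂. -/
/-- The closed second quadrant. -/
def closedD2 : Set ℂ := {k : ℂ | k.re ≤ 0 ∧ 0 ≤ k.im}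

/-- The open second quadrant. -/
def openD2 : Set ℂ := {k : ℂ | k.re < 0 ∧ 0 < k.im}

/-- The boundary of the second quadrant: the negative real axis together with
the positive imaginary axis. -/
def bdryD2 : Set ℂ := {k : ℂ | (k.im = 0 ∧ k.re ≤ 0) ∨ (k.re = 0 ∧ 0 ≤ k.im)}

open Complex Set Filter Asymptotics

lemma half_lt_re_div {a b : ℂ} (hb : b ≠ 0) (h : ‖b - a‖ < ‖a‖) :
    1 / 2 < (a / b).re := by
  have hbpos : 0 < ‖b‖ := by simpa [norm_pos_iff] using hb
  have h1 : ‖1 - a / b‖ < ‖a / b‖ := by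
    have : (1 : ℂ) - a / b = (b - a) / b := by field_simp
    rw [this, norm_div, norm_div]
    gcongr
  set w : ℂ := a / b with hw
  have hsq : Complex.normSq (1 - w) < Complex.normSq w := by
    have := mul_self_lt_mul_self (norm_nonneg _) h1
    simpa [Complex.normSq_eq_norm_sq, sq] using this
  have e1 : Complex.normSq (1 - w) = (1 - w.re) ^ 2 + w.im ^ 2 := by
    simp [Complex.normSq_apply]; ring
  have e2 : Complex.normSq w = w.re ^ 2 + w.im ^ 2 := by
    simp [Complex.normSq_apply]; ring
  nlinarith [hsq, e1, e2]

theorem rouche_sector_nonvanishing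
    (f g : ℂ → ℂ)
    (hf_cont : ContinuousOn f closedD2) (hg_cont : ContinuousOn g closedD2)
    (hf_anal : DifferentiableOn ℂ f openD2) (hg_anal : DifferentiableOn ℂ g openD2)
    (hf_lim : ∀ ε > 0, ∃ R, ∀ k ∈ closedD2, R ≤ ‖k‖ →
      ‖f k - 1‖ < ε)
    (hg_lim : ∀ ε > 0, ∃ R, ∀ k ∈ closedD2, R ≤ ‖k‖ →
      ‖g k - 1‖ < ε)
    (hbd : ∀ k ∈ bdryD2, ‖g k - f k‖ < ‖f k‖)
    (hg_nz : ∀ k ∈ closedD2, g k ≠ 0) :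
    ∀ k ∈ closedD2, f k ≠ 0 := by
  -- the quotient and the auxiliary function
  set h : ℂ → ℂ := fun z => f z / g z with hh
  set F : ℂ → ℂ := fun z => Complex.exp (-(h z)) with hF
  have hopen_eq : openD2 = Set.Iio (0:ℝ) ×ℂ Set.Ioi (0:ℝ) := by
    ext z; simp [openD2, Complex.mem_reProdIm]
  have hclosed : IsClosed closedD2 := by
    have : closedD2 = Complex.re ⁻¹' Set.Iic 0 ∩ Complex.im ⁻¹' Set.Ici 0 := by
      ext z; simp [closedD2, and_comm]
    rw [this]
    exact (isClosed_Iic.preimage Complex.continuous_re).inter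
      (isClosed_Ici.preimage Complex.continuous_im)
  have hsub : openD2 ⊆ closedD2 := fun z hz => ⟨hz.1.le, hz.2.le⟩
  have hcl_sub : closure (Set.Iio (0:ℝ) ×ℂ Set.Ioi (0:ℝ)) ⊆ closedD2 := by
    rw [← hopen_eq]; exact closure_minimal hsub hclosed
  -- boundedness of h on closedD2
  obtain ⟨R₁, hR₁⟩ := hf_lim 1 one_pos
  obtain ⟨R₂, hR₂⟩ := hg_lim (1/2) (by norm_num)
  set R : ℝ := max (max R₁ R₂) 0 with hR
  set K : Set ℂ := closedD2 ∩ Metric.closedBall 0 R with hK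
  have hKcpt : IsCompact K := (isCompact_closedBall 0 R).inter_left hclosed
  have hKne : K.Nonempty := ⟨0, ⟨le_rfl, le_rfl⟩, by
    simp [Metric.mem_closedBall]; exact le_max_right _ _⟩
  have hKsub : K ⊆ closedD2 := inter_subset_left
  obtain ⟨Cf, hCf⟩ := hKcpt.exists_bound_of_continuousOn (hf_cont.mono hKsub)
  obtain ⟨z₀, hz₀K, hz₀min⟩ := hKcpt.exists_isMinOn hKne
    ((continuous_norm.comp_continuousOn (hg_cont.mono hKsub)))
  have hm_pos : 0 < ‖g z₀‖ := by
    simpa [norm_pos_iff] using hg_nz z₀ (hKsub hz₀K)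
  set M : ℝ := max 4 (Cf / ‖g z₀‖) with hM
  have hbound : ∀ z ∈ closedD2, ‖h z‖ ≤ M := by
    intro z hz
    by_cases hzR : ‖z‖ ≤ R
    · have hzK : z ∈ K := ⟨hz, by simpa [Metric.mem_closedBall] using hzR⟩
      have h1 : ‖f z‖ ≤ Cf := by simpa using hCf z hzK
      have h2 : ‖g z₀‖ ≤ ‖g z‖ := hz₀min hzK
      have hgz : 0 < ‖g z‖ := by
        simpa [norm_pos_iff] using hg_nz z hz
      have : ‖h z‖ ≤ Cf / ‖g z₀‖ := by
        rw [hh]; simp only [norm_div]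
        exact div_le_div₀ (le_trans (norm_nonneg _) h1) h1 hm_pos h2
      exact this.trans (le_max_right _ _)
    · push_neg at hzR
      have hz1 : R₁ ≤ ‖z‖ := le_trans ((le_max_left R₁ R₂).trans (le_max_left _ _)) hzR.le
      have hz2 : R₂ ≤ ‖z‖ := le_trans ((le_max_right R₁ R₂).trans (le_max_left _ _)) hzR.le
      have hfz : ‖f z‖ ≤ 2 := by
        have := hR₁ z hz hz1
        calc ‖f z‖ = ‖f z - 1 + 1‖ := by ring_nf
          _ ≤ ‖f z - 1‖ + ‖1‖ := norm_add_le _ _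
          _ ≤ 2 := by simp at this ⊢; linarith
      have hgz : (1/2 : ℝ) ≤ ‖g z‖ := by
        have := hR₂ z hz hz2
        have htri : ‖(1 : ℂ)‖ - ‖g z‖ ≤ ‖g z - 1‖ := by
          have h0 := norm_sub_norm_le (1 : ℂ) (g z)
          calc ‖(1 : ℂ)‖ - ‖g z‖ ≤ ‖1 - g z‖ := h0
            _ = ‖g z - 1‖ := by rw [← norm_neg]; ring_nf
        simp at htri; linarith
      have : ‖h z‖ ≤ 4 := by
        rw [hh]; simp only [norm_div]
        rw [div_le_iff₀ (by linarith)]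
        linarith
      exact this.trans (le_max_left _ _)
  -- differentiability and continuity of F
  have hg_nz' : ∀ z ∈ openD2, g z ≠ 0 := fun z hz => hg_nz z (hsub hz)
  have hh_diff : DifferentiableOn ℂ h openD2 := hf_anal.div hg_anal hg_nz'
  have hF_diff : DifferentiableOn ℂ F openD2 := (hh_diff.neg).cexp
  have hF_cont : ContinuousOn F closedD2 :=
    ((hf_cont.div hg_cont hg_nz).neg).cexp
  have hdc : DiffContOnCl ℂ F (Set.Iio (0:ℝ) ×ℂ Set.Ioi (0:ℝ)) := by
    refine ⟨by rw [← hopen_eq]; exact hF_diff, hF_cont.mono hcl_sub⟩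
  -- norm of F
  have hnormF : ∀ z, ‖F z‖ = Real.exp (-(h z).re) := by
    intro z; rw [hF]; simp [Complex.norm_exp]
  -- growth bound
  have hB : ∃ c < (2 : ℝ), ∃ B,
      F =O[Bornology.cobounded ℂ ⊓ 𝓟 (Set.Iio (0:ℝ) ×ℂ Set.Ioi (0:ℝ))]
        fun z => Real.exp (B * ‖z‖ ^ c) := by
    refine ⟨1, one_lt_two, 0, ?_⟩
    refine IsBigO.of_bound (Real.exp M) ?_
    have : ∀ z ∈ (Set.Iio (0:ℝ) ×ℂ Set.Ioi (0:ℝ)),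
        ‖F z‖ ≤ Real.exp M * ‖Real.exp (0 * ‖z‖ ^ (1:ℝ))‖ := by
      intro z hz
      have hz2 : z ∈ closedD2 := hsub (by rw [hopen_eq]; exact hz)
      have h1 : -(h z).re ≤ M := by
        have := Complex.abs_re_le_norm (h z)
        have := hbound z hz2
        have := neg_abs_le (h z).re
        linarith [abs_le.mp (abs_le.mpr ⟨neg_abs_le _, le_abs_self _⟩ :
          |(h z).re| ≤ |(h z).re|)]
      rw [hnormF, zero_mul, Real.exp_zero]
      simpa using Real.exp_le_exp.mpr h1
    exact (Filter.eventually_principal.mpr this).filter_mono inf_le_right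
  -- boundary bounds
  have hbdry : ∀ z ∈ bdryD2, ‖F z‖ ≤ Real.exp (-(1/2)) := by
    intro z hz
    have hz2 : z ∈ closedD2 := by
      rcases hz with ⟨him, hre⟩ | ⟨hre, him⟩
      · exact ⟨hre, him.ge.trans (le_of_eq rfl)⟩
      · exact ⟨hre.le, him⟩
    have hre : 1/2 < (h z).re :=
      half_lt_re_div (hg_nz z hz2) (hbd z hz)
    rw [hnormF]
    exact Real.exp_le_exp.mpr (by linarith)
  -- apply Phragmén–Lindelöf
  have hPL : ∀ z ∈ closedD2, ‖F z‖ ≤ Real.exp (-(1/2)) := by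
    intro z hz
    refine PhragmenLindelof.quadrant_II hdc hB ?_ ?_ hz.1 hz.2
    · intro x hx
      exact hbdry x (Or.inl ⟨by simp, by simpa using hx⟩)
    · intro x hx
      exact hbdry (x * Complex.I) (Or.inr ⟨by simp, by simpa using hx⟩)
  -- conclude
  intro k hk hfk
  have := hPL k hk
  rw [hnormF] at this
  have hzero : h k = 0 := by rw [hh]; simp [hfk]
  rw [hzero] at this
  simp at this
  have : (0:ℝ) ≤ -(1/2) := Real.exp_le_exp.mp (by simpa using this)
  linarith
end

section
/- Suppose f : ℂ → ℂ is continuous on the closed second quadrant D̄₂, and there exist functions g_T : D̄₂ → ℂ (for T ≥ 0) and a constant C such that sup_{k ∈ D̄₂} |g_T(k) − f(k)| ≤ C/(1+T), each g_T is nonvanishing on D̄₂ for T large enough, and both f and g_T tend to 1 at infinity in D̄₂ uniformly in T, with f analytic in the open quadrant D₂ and each g_T analytic in D₂. Then f is nonvanishing on D̄₂ provided f is nonvanishing on ∂D₂. -/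
lemma openD2_isOpen : IsOpen openD2 :=
  (isOpen_lt Complex.continuous_re continuous_const).inter
    (isOpen_lt continuous_const Complex.continuous_im)

lemma openD2_subset_closedD2 : openD2 ⊆ closedD2 :=
  fun _ h => ⟨h.1.le, h.2.le⟩

lemma openD2_convex : Convex ℝ openD2 :=
  (convex_halfSpace_re_lt 0).inter (convex_halfSpace_im_gt 0)

theorem nonvanishing_from_approximation
    (f : ℂ → ℂ) (g : ℝ → ℂ → ℂ) (C : ℝ)
    (hf_cont : ContinuousOn f closedD2)
    (hf_anal : DifferentiableOn ℂ f openD2)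
    (hg_anal : ∀ T : ℝ, 0 ≤ T → DifferentiableOn ℂ (g T) openD2)
    (hg_cont : ∀ T : ℝ, 0 ≤ T → ContinuousOn (g T) closedD2)
    (happrox : ∀ T : ℝ, 0 ≤ T → ∀ k ∈ closedD2,
      ‖g T k - f k‖ ≤ C / (1 + T))
    (hg_nz : ∃ T₀ : ℝ, 0 ≤ T₀ ∧ ∀ T ≥ T₀, ∀ k ∈ closedD2, g T k ≠ 0)
    (hf_lim : ∀ ε > 0, ∃ R, ∀ k ∈ closedD2, R ≤ ‖k‖ →
      ‖f k - 1‖ < ε)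
    (hg_lim : ∀ ε > 0, ∃ R, ∀ T : ℝ, 0 ≤ T → ∀ k ∈ closedD2,
      R ≤ ‖k‖ → ‖g T k - 1‖ < ε)
    (hf_bd : ∀ k ∈ bdryD2, f k ≠ 0) :
    ∀ k ∈ closedD2, f k ≠ 0 := by
  intro k hk
  rcases eq_or_lt_of_le hk.1 with hre | hre
  · exact hf_bd k (Or.inr ⟨hre, hk.2⟩)
  rcases eq_or_lt_of_le hk.2 with him | him
  · exact hf_bd k (Or.inl ⟨him.symm, hk.1⟩)
  -- now k is in the open quadrant
  have hko : k ∈ openD2 := ⟨hre, him⟩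
  intro hfk0
  obtain ⟨T₀, hT₀, hTnz⟩ := hg_nz
  -- f is analytic on openD2
  have hA : AnalyticOnNhd ℂ f openD2 := hf_anal.analyticOnNhd openD2_isOpen
  -- f is not eventually zero near k, since f tends to 1 at infinity
  rcases (hA k hko).eventually_eq_zero_or_eventually_ne_zero with hev | hev
  · -- identity theorem: f ≡ 0 on openD2, contradicting the limit at infinity
    have hzero : Set.EqOn f 0 openD2 :=
      hA.eqOn_zero_of_preconnected_of_eventuallyEq_zero
        openD2_convex.isPreconnected hko hev
    obtain ⟨R, hR⟩ := hf_lim (1/2) (by norm_num)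
    set M : ℝ := max R 1 with hM
    have hM1 : (1:ℝ) ≤ M := le_max_right _ _
    set z : ℂ := Complex.mk (-M) M with hz
    have hzre : z.re = -M := rfl
    have hzim : z.im = M := rfl
    have hzo : z ∈ openD2 := ⟨by rw [hzre]; linarith, by rw [hzim]; linarith⟩
    have hzabs : R ≤ ‖z‖ := by
      calc R ≤ M := le_max_left _ _
      _ = |z.im| := by rw [hzim, abs_of_nonneg (by linarith)]
      _ ≤ ‖z‖ := Complex.abs_im_le_norm z
    have := hR z (openD2_subset_closedD2 hzo) hzabs
    rw [hzero hzo] at this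
    simp at this
    norm_num at this
  -- zeros are isolated: find a small closed ball around k inside openD2
  -- with f nonzero off the center
  rw [eventually_nhdsWithin_iff, Metric.eventually_nhds_iff] at hev
  obtain ⟨ε₁, hε₁, hε₁f⟩ := hev
  obtain ⟨ε₂, hε₂, hε₂o⟩ := Metric.isOpen_iff.1 openD2_isOpen k hko
  set r : ℝ := min ε₁ ε₂ / 2 with hr
  have hr0 : 0 < r := by positivity
  have hball : Metric.closedBall k r ⊆ openD2 := fun z hz => by
    apply hε₂o
    simp only [Metric.mem_closedBall] at hz
    simp only [Metric.mem_ball]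
    calc dist z k ≤ r := hz
    _ < ε₂ := by
      have := min_le_right ε₁ ε₂
      simp only [hr]; linarith
  have hballC : Metric.closedBall k r ⊆ closedD2 :=
    hball.trans openD2_subset_closedD2
  have hfne : ∀ z ∈ Metric.closedBall k r, z ≠ k → f z ≠ 0 := by
    intro z hz hzk
    apply hε₁f
    · simp only [Metric.mem_closedBall] at hz
      calc dist z k ≤ r := hz
      _ < ε₁ := by
        have := min_le_left ε₁ ε₂
        simp only [hr]; linarith
    · simpa using hzk
  -- minimum of |f| on the sphere
  have hsphere_ne : (Metric.sphere k r).Nonempty :=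
    NormedSpace.sphere_nonempty.2 hr0.le
  have hsphere_sub : Metric.sphere k r ⊆ Metric.closedBall k r :=
    Metric.sphere_subset_closedBall
  have hcont_sph : ContinuousOn (fun z => ‖f z‖) (Metric.sphere k r) :=
    ((hf_cont.mono (hsphere_sub.trans hballC)).norm)
  obtain ⟨z₀, hz₀, hz₀min⟩ :=
    (isCompact_sphere k r).exists_isMinOn hsphere_ne hcont_sph
  set δ : ℝ := ‖f z₀‖ with hδ
  have hz₀k : z₀ ≠ k := by
    intro h
    have : dist z₀ k = r := hz₀
    rw [h] at this; simp at this; exact (ne_of_gt hr0) this.symm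
  have hδ0 : 0 < δ := by
    rw [hδ, norm_pos_iff]
    exact hfne z₀ (hsphere_sub hz₀) hz₀k
  -- choose T large
  set T : ℝ := max T₀ (4 * |C| / δ) with hT
  have hTT₀ : T₀ ≤ T := le_max_left _ _
  have hT0 : 0 ≤ T := hT₀.trans hTT₀
  have happ : ∀ z ∈ closedD2, ‖g T z - f z‖ ≤ δ / 4 := by
    intro z hz
    have h1 : ‖g T z - f z‖ ≤ C / (1 + T) := happrox T hT0 z hz
    have h2 : C / (1 + T) ≤ δ / 4 := by
      have hCabs : C ≤ |C| := le_abs_self C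
      have h4 : 4 * |C| / δ ≤ T := le_max_right _ _
      have h1T : (0:ℝ) < 1 + T := by linarith
      rw [div_le_div_iff₀ h1T (by norm_num : (0:ℝ) < 4)]
      have : 4 * |C| ≤ δ * T := by
        rw [div_le_iff₀ hδ0] at h4; linarith [mul_comm T δ]
      calc C * 4 ≤ |C| * 4 := by linarith
      _ ≤ δ * T := by linarith
      _ ≤ δ * (1 + T) := by nlinarith
    calc ‖g T z - f z‖ = ‖g T z - f z‖ := rfl
    _ ≤ C / (1 + T) := h1
    _ ≤ δ / 4 := h2
  have hGnz : ∀ z ∈ closedD2, g T z ≠ 0 := hTnz T hTT₀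
  -- lower bound for g T on the sphere
  have hGlb : ∀ z ∈ Metric.sphere k r, 3 * δ / 4 ≤ ‖g T z‖ := by
    intro z hz
    have hzC : z ∈ closedD2 := hballC (hsphere_sub hz)
    have h1 : δ ≤ ‖f z‖ := hz₀min hz
    have h2 : ‖g T z - f z‖ ≤ δ / 4 := happ z hzC
    have h3 : ‖f z‖ - ‖g T z‖ ≤ ‖g T z - f z‖ := by
      rw [norm_sub_rev]; exact norm_sub_norm_le _ _
    linarith
  -- maximum modulus principle for F = f / g T - 1 on the ball
  set F : ℂ → ℂ := fun z => f z / g T z - 1 with hF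
  have hdiff : DiffContOnCl ℂ F (Metric.ball k r) := by
    constructor
    · apply DifferentiableOn.sub_const
      apply DifferentiableOn.div
      · exact hf_anal.mono ((Metric.ball_subset_closedBall).trans hball)
      · exact (hg_anal T hT0).mono ((Metric.ball_subset_closedBall).trans hball)
      · intro z hz
        exact hGnz z (hballC (Metric.ball_subset_closedBall hz))
    · rw [closure_ball k (ne_of_gt hr0)]
      refine ContinuousOn.sub (ContinuousOn.div ?_ ?_ ?_) continuousOn_const
      · exact hf_cont.mono hballC
      · exact (hg_cont T hT0).mono hballC
      · intro z hz; exact hGnz z (hballC hz)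
  have hfr : ∀ z ∈ frontier (Metric.ball k r), ‖F z‖ ≤ 1/3 := by
    intro z hz
    rw [frontier_ball k (ne_of_gt hr0)] at hz
    have hzC : z ∈ closedD2 := hballC (hsphere_sub hz)
    have hGz : g T z ≠ 0 := hGnz z hzC
    have : F z = (f z - g T z) / g T z := by
      rw [hF]; field_simp
    rw [this, norm_div]
    have h1 : ‖f z - g T z‖ ≤ δ / 4 := by
      rw [← norm_neg, neg_sub]; exact happ z hzC
    have h2 : 3 * δ / 4 ≤ ‖g T z‖ := hGlb z hz
    calc ‖f z - g T z‖ / ‖g T z‖ ≤ (δ/4) / (3*δ/4) :=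
      div_le_div₀ (by positivity) h1 (by positivity) h2
    _ = 1/3 := by field_simp
  have hk_cl : k ∈ closure (Metric.ball k r) :=
    subset_closure (Metric.mem_ball_self hr0)
  have hmax : ‖F k‖ ≤ 1/3 :=
    Complex.norm_le_of_forall_mem_frontier_norm_le Metric.isBounded_ball
      hdiff hfr hk_cl
  rw [hF] at hmax
  simp only [hfk0, zero_div, zero_sub, norm_neg, norm_one] at hmax
  norm_num at hmax
end
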